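/- arXiv:1309.2116 — 3 statements merged into one kernel-verified Lean document; each statement's English description precedes it below -/
import Mathlib

section
/- Let $(z_j)_{j\ge1}$ be zero-mean square-integrable random variables. Assume there exist a real number $q\ge 1$ and a constant $C$ such that $E\big(\sum_{j=m+1}^{m+n} z_j\big)^2 \le C((m+n)^q - m^q)$ for all $m\ge 0$ and $n\ge 1$. Then for all $\iota > 0$, almost surely $n^{-(q/2+\iota)}\sum_{j=1}^n z_j \to 0$ as $n\to\infty$. -/
open MeasureTheory Filter Finset


namespace GalKoksma

set_option linter.unusedSectionVars false

variable {Ω : Type*} [MeasurableSpace Ω] {μ : Measure Ω}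

noncomputable def S (z : ℕ → Ω → ℝ) (n : ℕ) (ω : Ω) : ℝ := ∑ j ∈ Finset.Ioc 0 n, z j ω

lemma S_sub (z : ℕ → Ω → ℝ) {m n : ℕ} (h : m ≤ n) (ω : Ω) :
    S z n ω - S z m ω = ∑ j ∈ Finset.Ioc m n, z j ω := by
  have := Finset.sum_Ioc_consecutive (fun j => z j ω) (Nat.zero_le m) h
  rw [S, S, ← this]
  ring

noncomputable def D (z : ℕ → Ω → ℝ) (l i : ℕ) (ω : Ω) : ℝ :=
  ∑ j ∈ Finset.Ioc (i * 2 ^ l) ((i + 1) * 2 ^ l), z j ω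

noncomputable def T (z : ℕ → Ω → ℝ) (K : ℕ) (ω : Ω) : ℝ :=
  ∑ l ∈ Finset.range (K + 1), ∑ i ∈ Finset.range (2 ^ (K - l)), (D z l i ω) ^ 2

lemma T_nonneg (z : ℕ → Ω → ℝ) (K : ℕ) (ω : Ω) : 0 ≤ T z K ω :=
  Finset.sum_nonneg fun _ _ => Finset.sum_nonneg fun _ _ => sq_nonneg _

lemma chain (z : ℕ → Ω → ℝ) (K n : ℕ) (hn : n ≤ 2 ^ K) (ω : Ω) :
    (S z n ω) ^ 2 ≤ (K + 1 : ℝ) * T z K ω := by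
  set f : ℕ → ℝ := fun l => S z (2 ^ l * (n / 2 ^ l)) ω with hf
  have htel : ∑ l ∈ range (K+1), (f l - f (l+1)) = f 0 - f (K+1) :=
    Finset.sum_range_sub' f (K+1)
  have hf0 : f 0 = S z n ω := by simp [hf]
  have hfK : f (K+1) = 0 := by
    have h1 : n / 2 ^ (K+1) = 0 :=
      Nat.div_eq_of_lt (lt_of_le_of_lt hn (Nat.pow_lt_pow_right one_lt_two (Nat.lt_succ_self K)))
    simp [hf, h1, S]
  have hS : S z n ω = ∑ l ∈ range (K+1), (f l - f (l+1)) := by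
    rw [htel, hf0, hfK, sub_zero]
  have hCS : (S z n ω)^2 ≤ (K+1 : ℝ) * ∑ l ∈ range (K+1), (f l - f (l+1))^2 := by
    rw [hS]
    have := sq_sum_le_card_mul_sum_sq (s := range (K+1)) (f := fun l => f l - f (l+1))
    simpa using this
  refine hCS.trans (mul_le_mul_of_nonneg_left (Finset.sum_le_sum fun l hl => ?_) (by positivity))
  have hlK : l ≤ K := Nat.lt_succ_iff.mp (Finset.mem_range.mp hl)
  set m := n / 2 ^ l with hm
  have hdiv : n / 2 ^ (l+1) = m / 2 := by
    rw [hm, pow_succ, ← Nat.div_div_eq_div_mul]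
  rcases Nat.even_or_odd m with he | ho
  · have h2 : 2 ^ (l+1) * (n / 2 ^ (l+1)) = 2 ^ l * m := by
      have hm0 : m % 2 = 0 := Nat.even_iff.mp he
      have h22 : 2 * (m / 2) = m := by omega
      rw [hdiv, pow_succ, mul_assoc, h22]
    have : f (l+1) = f l := by simp only [hf, h2, hm]
    rw [this, sub_self, zero_pow two_ne_zero]
    exact Finset.sum_nonneg fun _ _ => sq_nonneg _
  · have hmod : m % 2 = 1 := Nat.odd_iff.mp ho
    set i := 2 * (m / 2) with hi
    have him : i + 1 = m := by omega
    have harg1 : 2 ^ (l+1) * (n / 2 ^ (l+1)) = i * 2 ^ l := by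
      rw [hdiv, pow_succ, hi]; ring
    have harg0 : 2 ^ l * m = (i+1) * 2 ^ l := by rw [him]; ring
    have hDi : f l - f (l+1) = D z l i ω := by
      rw [hf]
      simp only [harg1, ← hm, harg0]
      exact S_sub z (Nat.mul_le_mul_right (2 ^ l) (show i ≤ i + 1 by omega)) ω
    have hilt : i < 2 ^ (K - l) := by
      have h1 : (i+1) * 2 ^ l ≤ n := by
        rw [him, hm]
        exact Nat.div_mul_le_self n (2 ^ l)
      have h2 : (i+1) * 2 ^ l ≤ 2 ^ (K - l) * 2 ^ l := by
        rw [← pow_add, Nat.sub_add_cancel hlK]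
        exact h1.trans hn
      have := Nat.le_of_mul_le_mul_right h2 (pow_pos two_pos l)
      omega
    rw [hDi]
    exact Finset.single_le_sum (f := fun i' => (D z l i' ω)^2)
      (fun _ _ => sq_nonneg _) (Finset.mem_range.mpr hilt)

end GalKoksma

namespace GalKoksma

variable {Ω : Type*} [MeasurableSpace Ω] {μ : Measure Ω} {z : ℕ → Ω → ℝ} {q C : ℝ}

lemma integrable_D_sq (hL2 : ∀ j, MemLp (z j) 2 μ) (l i : ℕ) :
    Integrable (fun ω => (D z l i ω) ^ 2) μ :=
  (memLp_finset_sum _ (fun j _ => hL2 j)).integrable_sq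

lemma integrable_T (hL2 : ∀ j, MemLp (z j) 2 μ) (K : ℕ) : Integrable (T z K) μ := by
  apply integrable_finset_sum
  intro l _
  exact integrable_finset_sum _ (fun i _ => integrable_D_sq hL2 l i)

lemma integral_T_le (hq : 1 ≤ q)
    (hvar : ∀ m n : ℕ, 1 ≤ n →
        ∫ ω, (∑ j ∈ Finset.Icc (m + 1) (m + n), z j ω) ^ 2 ∂μ ≤
          C * (((m + n : ℕ) : ℝ) ^ q - (m : ℝ) ^ q))
    (hL2 : ∀ j, MemLp (z j) 2 μ) (K : ℕ) :
    ∫ ω, T z K ω ∂μ ≤ (K + 1 : ℝ) * (C * ((2:ℝ) ^ K) ^ q) := by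
  have hq0 : q ≠ 0 := by intro h; rw [h] at hq; linarith
  simp only [T]
  rw [integral_finset_sum _ (fun l _ => integrable_finset_sum _ fun i _ => integrable_D_sq hL2 l i)]
  have key : ∀ l ∈ Finset.range (K+1),
      (∫ ω, ∑ i ∈ Finset.range (2^(K-l)), (D z l i ω)^2 ∂μ) ≤ C * ((2:ℝ)^K)^q := by
    intro l hl
    have hlK : l ≤ K := Nat.lt_succ_iff.mp (Finset.mem_range.mp hl)
    rw [integral_finset_sum _ (fun i _ => integrable_D_sq hL2 l i)]
    set g : ℕ → ℝ := fun i => ((i * 2 ^ l : ℕ) : ℝ) ^ q with hg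
    have hstep : ∀ i : ℕ, ∫ ω, (D z l i ω)^2 ∂μ ≤ C * (g (i+1) - g i) := by
      intro i
      have h1 : 1 ≤ 2 ^ l := Nat.one_le_two_pow
      have hv := hvar (i * 2 ^ l) (2 ^ l) h1
      have harg : i * 2 ^ l + 2 ^ l = (i + 1) * 2 ^ l := by ring
      have hIcc : Finset.Icc (i * 2 ^ l + 1) (i * 2 ^ l + 2 ^ l)
          = Finset.Ioc (i * 2 ^ l) ((i+1) * 2 ^ l) := by
        rw [Finset.Icc_add_one_left_eq_Ioc, harg]
      rw [hIcc] at hv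
      simpa [D, hg, harg] using hv
    calc ∑ i ∈ Finset.range (2^(K-l)), ∫ ω, (D z l i ω)^2 ∂μ
        ≤ ∑ i ∈ Finset.range (2^(K-l)), C * (g (i+1) - g i) :=
          Finset.sum_le_sum fun i _ => hstep i
      _ = C * (g (2^(K-l)) - g 0) := by rw [← Finset.mul_sum, Finset.sum_range_sub g]
      _ = C * ((2:ℝ)^K)^q := by
          have h2 : (2:ℕ)^(K-l) * 2^l = 2^K := by rw [← pow_add, Nat.sub_add_cancel hlK]
          have hg0 : g 0 = 0 := by simp [hg, Real.zero_rpow hq0]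
          have hgN : g (2^(K-l)) = ((2:ℝ)^K)^q := by
            rw [hg]; simp only [h2]; norm_num
          rw [hg0, hgN, sub_zero]
  refine (Finset.sum_le_sum key).trans (le_of_eq ?_)
  rw [Finset.sum_const, Finset.card_range, nsmul_eq_mul]
  push_cast
  ring

end GalKoksma


namespace GalKoksma
lemma measurable_T {Ω : Type*} [MeasurableSpace Ω] {z : ℕ → Ω → ℝ}
    (hmeas : ∀ j, Measurable (z j)) (K : ℕ) : Measurable (T z K) := by
  apply Finset.measurable_sum
  intro l _
  apply Finset.measurable_sum
  intro i _
  exact (Finset.measurable_sum _ fun j _ => hmeas j).pow_const 2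
end GalKoksma

open GalKoksma in
/-- Gal–Koksma strong law of large numbers: if `z j` are zero-mean square-integrable
random variables with `E(∑_{j=m+1}^{m+n} z j)² ≤ C((m+n)^q - m^q)` for some `q ≥ 1`,
then for every `ι > 0`, `n^{-(q/2+ι)} ∑_{j=1}^n z j → 0` almost surely. -/
theorem stmt_2 {Ω : Type*} [MeasurableSpace Ω] (μ : Measure Ω) [IsProbabilityMeasure μ]
    (z : ℕ → Ω → ℝ) (q C : ℝ) (hq : 1 ≤ q)
    (hmeas : ∀ j, Measurable (z j))
    (hL2 : ∀ j, MemLp (z j) 2 μ)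
    (hmean : ∀ j, ∫ ω, z j ω ∂μ = 0)
    (hvar : ∀ m n : ℕ, 1 ≤ n →
        ∫ ω, (∑ j ∈ Finset.Icc (m + 1) (m + n), z j ω) ^ 2 ∂μ ≤
          C * (((m + n : ℕ) : ℝ) ^ q - (m : ℝ) ^ q)) :
    ∀ ι : ℝ, 0 < ι →
      ∀ᵐ ω ∂μ, Tendsto
        (fun n : ℕ => (∑ j ∈ Finset.Icc 1 n, z j ω) / (n : ℝ) ^ (q / 2 + ι))
        atTop (nhds 0) := by
  intro ι hι
  have hq0 : (0:ℝ) < q := by linarith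
  set b : ℝ := q / 2 + ι with hb
  have hb0 : 0 < b := by positivity
  have hC : 0 ≤ C := by
    have h := hvar 0 1 le_rfl
    have h2 : (0:ℝ) ≤ ∫ ω, (∑ j ∈ Finset.Icc (0+1) (0+1), z j ω)^2 ∂μ :=
      integral_nonneg fun ω => sq_nonneg _
    have h3 := h2.trans h
    rw [show ((0+1:ℕ):ℝ) = 1 by norm_num, show ((0:ℕ):ℝ) = 0 by norm_num,
      Real.one_rpow, Real.zero_rpow (ne_of_gt hq0)] at h3
    linarith
  -- the dominating sequence
  set c : ℕ → ℝ := fun K => (2:ℝ)^(2*b) * ((K:ℝ)+1) / ((2:ℝ)^K)^(2*b) with hc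
  set G : ℕ → Ω → ℝ := fun K ω => c K * T z K ω with hG
  have hcnn : ∀ K, 0 ≤ c K := fun K => by rw [hc]; positivity
  have hGnn : ∀ K ω, 0 ≤ G K ω := fun K ω => mul_nonneg (hcnn K) (T_nonneg z K ω)
  have hGint : ∀ K, Integrable (G K) μ := fun K => (integrable_T hL2 K).const_mul (c K)
  have hGmeas : ∀ K, Measurable (G K) := fun K => (measurable_T hmeas K).const_mul (c K)
  set r : ℝ := (2:ℝ) ^ (-(2*ι)) with hr
  have hr0 : 0 ≤ r := le_of_lt (Real.rpow_pos_of_pos two_pos _)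
  have hr1 : r < 1 := Real.rpow_lt_one_of_one_lt_of_neg one_lt_two (by linarith)
  set A : ℝ := (2:ℝ)^(2*b) * C with hA
  have hpow : ∀ K : ℕ, ((2:ℝ)^K)^q / ((2:ℝ)^K)^(2*b) = r ^ K := by
    intro K
    have h2K : (0:ℝ) < (2:ℝ)^K := by positivity
    rw [← Real.rpow_sub h2K, show q - 2*b = -(2*ι) by rw [hb]; ring,
      show ((2:ℝ)^K) = (2:ℝ)^(K:ℝ) from (Real.rpow_natCast 2 K).symm,
      ← Real.rpow_mul (by norm_num : (0:ℝ) ≤ 2), mul_comm,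
      Real.rpow_mul (by norm_num : (0:ℝ) ≤ 2), Real.rpow_natCast]
  have hbound : ∀ K : ℕ, ∫ ω, G K ω ∂μ ≤ A * ((K:ℝ)+1)^2 * r ^ K := by
    intro K
    have h2Kb : ((2:ℝ)^K)^(2*b) ≠ 0 := by positivity
    calc ∫ ω, G K ω ∂μ = c K * ∫ ω, T z K ω ∂μ := integral_const_mul _ _
      _ ≤ c K * (((K:ℝ) + 1) * (C * ((2:ℝ)^K)^q)) :=
          mul_le_mul_of_nonneg_left (integral_T_le hq hvar hL2 K) (hcnn K)
      _ = A * ((K:ℝ)+1)^2 * (((2:ℝ)^K)^q / ((2:ℝ)^K)^(2*b)) := by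
          rw [hc, hA]; field_simp
      _ = A * ((K:ℝ)+1)^2 * r ^ K := by rw [hpow K]
  have hrnorm : ‖r‖ < 1 := by rw [Real.norm_eq_abs, abs_of_nonneg hr0]; exact hr1
  have hsum : Summable (fun K : ℕ => A * ((K:ℝ)+1)^2 * r ^ K) := by
    have h2 := summable_pow_mul_geometric_of_norm_lt_one (R := ℝ) 2 hrnorm
    have h1 := summable_pow_mul_geometric_of_norm_lt_one (R := ℝ) 1 hrnorm
    have h0 := summable_pow_mul_geometric_of_norm_lt_one (R := ℝ) 0 hrnorm
    have := ((h2.add (h1.mul_left 2)).add h0).mul_left A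
    exact this.congr fun K => by push_cast; ring
  have hsumG : Summable (fun K : ℕ => ∫ ω, G K ω ∂μ) :=
    Summable.of_nonneg_of_le (fun K => integral_nonneg (hGnn K)) hbound hsum
  have hlint : ∫⁻ ω, ∑' K, ENNReal.ofReal (G K ω) ∂μ ≠ ⊤ := by
    rw [lintegral_tsum (fun K => ((hGmeas K).ennreal_ofReal).aemeasurable)]
    rw [tsum_congr (fun K =>
      (ofReal_integral_eq_lintegral_ofReal (hGint K) (ae_of_all _ (hGnn K))).symm)]
    rw [← ENNReal.ofReal_tsum_of_nonneg (fun K => integral_nonneg (hGnn K)) hsumG]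
    exact ENNReal.ofReal_ne_top
  have hae := ae_lt_top (Measurable.ennreal_tsum fun K => (hGmeas K).ennreal_ofReal) hlint
  -- convert goal to S
  have hIcc : ∀ n : ℕ, Finset.Icc 1 n = Finset.Ioc 0 n := fun n => by
    ext j; simp [Nat.lt_iff_add_one_le]
  have hsize : Tendsto Nat.size atTop atTop := by
    apply tendsto_atTop_atTop.mpr
    intro m
    exact ⟨2^m, fun n hn => (Nat.lt_size.mpr hn).le⟩
  filter_upwards [hae] with ω hω
  have htendG : Tendsto (fun K => G K ω) atTop (nhds 0) := by
    have h1 : Tendsto (fun K => ENNReal.ofReal (G K ω)) atTop (nhds 0) :=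
      ENNReal.tendsto_atTop_zero_of_tsum_ne_top hω.ne
    have h2 := (ENNReal.tendsto_toReal (by simp)).comp h1
    simp only [ENNReal.toReal_zero] at h2
    exact h2.congr fun K => ENNReal.toReal_ofReal (hGnn K ω)
  have key : Tendsto (fun n : ℕ => S z n ω / (n:ℝ) ^ b) atTop (nhds 0) := by
    apply squeeze_zero_norm'
      (a := fun n : ℕ => Real.sqrt (G (Nat.size n) ω))
    · filter_upwards [eventually_ge_atTop 1] with n hn
      set K := Nat.size n with hKdef
      have hK1 : 1 ≤ K := Nat.size_pos.mpr hn
      have hnK : n ≤ 2 ^ K := (Nat.lt_size_self n).le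
      have hKn : 2 ^ (K - 1) ≤ n := by
        by_contra h
        push_neg at h
        have := Nat.size_le.mpr h
        omega
      have hn1 : (1:ℝ) ≤ (n:ℝ) := by exact_mod_cast hn
      have hsq : (S z n ω / (n:ℝ)^b)^2 ≤ G K ω := by
        have h1 : (S z n ω)^2 ≤ ((K:ℝ)+1) * T z K ω := chain z K n hnK ω
        have heq : (S z n ω / (n:ℝ)^b)^2 = (S z n ω)^2 / (n:ℝ)^(2*b) := by
          rw [div_pow]
          congr 1
          rw [← Real.rpow_natCast ((n:ℝ)^b) 2, ← Real.rpow_mul (by linarith)]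
          norm_num [mul_comm]
        have h2K1 : ((2:ℝ)^(K-1) : ℝ) ≤ (n:ℝ) := by
          have h := (Nat.cast_le (α := ℝ)).mpr hKn
          push_cast at h
          exact h
        have hmono : ((2:ℝ)^(K-1))^(2*b) ≤ (n:ℝ)^(2*b) :=
          Real.rpow_le_rpow (by positivity) h2K1 (by positivity)
        have hhalf : ((2:ℝ)^(K-1))^(2*b) = ((2:ℝ)^K)^(2*b) / (2:ℝ)^(2*b) := by
          rw [show (2:ℝ)^(K-1) = (2:ℝ)^K / 2 by
              rw [eq_div_iff (two_ne_zero), ← pow_succ, Nat.sub_add_cancel hK1],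
            Real.div_rpow (by positivity) (by norm_num)]
        calc (S z n ω / (n:ℝ)^b)^2 = (S z n ω)^2 / (n:ℝ)^(2*b) := heq
          _ ≤ (S z n ω)^2 / ((2:ℝ)^(K-1))^(2*b) := by
              gcongr
          _ = (S z n ω)^2 * (2:ℝ)^(2*b) / ((2:ℝ)^K)^(2*b) := by
              rw [hhalf, div_div_eq_mul_div]
          _ ≤ (((K:ℝ)+1) * T z K ω) * (2:ℝ)^(2*b) / ((2:ℝ)^K)^(2*b) := by
              gcongr
          _ = G K ω := by rw [hG, hc]; ring
      rw [Real.norm_eq_abs]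
      exact Real.abs_le_sqrt hsq
    · have := (Real.continuous_sqrt.tendsto' 0 0 Real.sqrt_zero).comp (htendG.comp hsize)
      exact this
  refine key.congr fun n => ?_
  rw [S, hIcc n]
end

section
/- Let $T:[0,1]\to[0,1]$ be a map, $x_0:[0,1]\to[0,1]$ (the parameter-dependent point written as $x_0(a)$), and suppose for the recursion $x_{j+1}(a)=T_a(x_j(a))$ the chain rule identity holds at a parameter $a$ where all maps are differentiable: $x_j'(a) = (T_a^{j-k})'(x_k(a))\,x_k'(a) + \sum_{i=k+1}^{j} (T_a^{j-i})'(x_i(a))\,(\partial_a T_a)(x_{i-1}(a))$ for $0\le k< j$. If additionally $|T_a'(x)|\ge \lambda > 1$ everywhere along the orbit, $|(\partial_a T_a)(x)| \le D$ for all relevant $x$, and $|x_k'(a)| \ge D/(\lambda-1) + 2L$ for some $L \ge 0$, then for all $j > k$: $|x_j'(a)| \ge 2L\,|(T_a^{j-k})'(x_k(a))| \ge 2L\lambda^{j-k}$. -/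
/-- Lower bound on the parameter derivative along the orbit. Here `d l` stands for the
one-step spatial derivative `T_a'(x_l(a))`, so that `(T_a^{j-i})'(x_i(a)) = ∏_{l=i}^{j-1} d l`;
`Dx j` stands for `x_j'(a)` and `Pa i` for `(∂_a T_a)(x_i(a))`. Assuming the chain rule
identity, the expansion `|d l| ≥ λ > 1`, the bound `|Pa i| ≤ D`, and
`|Dx k| ≥ D/(λ-1) + 2L`, one gets `|Dx j| ≥ 2L |(T_a^{j-k})'(x_k(a))| ≥ 2L λ^{j-k}` for `j > k`. -/
theorem stmt_3 (d Dx Pa : ℕ → ℝ) (lam D L : ℝ) (k : ℕ)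
    (hlam : 1 < lam) (hD : 0 ≤ D) (hL : 0 ≤ L)
    (hchain : ∀ j, k < j →
      Dx j = (∏ l ∈ Finset.Ico k j, d l) * Dx k +
        ∑ i ∈ Finset.Icc (k + 1) j, (∏ l ∈ Finset.Ico i j, d l) * Pa (i - 1))
    (hexp : ∀ l, lam ≤ |d l|)
    (hPa : ∀ i, |Pa i| ≤ D)
    (hDxk : D / (lam - 1) + 2 * L ≤ |Dx k|) :
    ∀ j, k < j →
      2 * L * lam ^ (j - k) ≤ 2 * L * |∏ l ∈ Finset.Ico k j, d l| ∧
      2 * L * |∏ l ∈ Finset.Ico k j, d l| ≤ |Dx j| := by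
  have hlam0 : (0:ℝ) < lam := by linarith
  have hlam1 : (0:ℝ) < lam - 1 := by linarith
  have hDdiv : 0 ≤ D / (lam - 1) := div_nonneg hD (le_of_lt hlam1)
  -- chain rule identity extended to j = k
  have hchain' : ∀ j, k ≤ j →
      Dx j = (∏ l ∈ Finset.Ico k j, d l) * Dx k +
        ∑ i ∈ Finset.Icc (k + 1) j, (∏ l ∈ Finset.Ico i j, d l) * Pa (i - 1) := by
    intro j hj
    rcases eq_or_lt_of_le hj with rfl | h
    · simp
    · exact hchain j h
  -- one-step recurrence
  have hrec : ∀ j, k ≤ j → Dx (j + 1) = d j * Dx j + Pa j := by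
    intro j hj
    have h1 := hchain' (j + 1) (by omega)
    rw [Finset.sum_Icc_succ_top (by omega : k + 1 ≤ j + 1)] at h1
    rw [Finset.prod_Ico_succ_top hj] at h1
    have h2 : ∑ i ∈ Finset.Icc (k + 1) j, (∏ l ∈ Finset.Ico i (j + 1), d l) * Pa (i - 1)
        = ∑ i ∈ Finset.Icc (k + 1) j, ((∏ l ∈ Finset.Ico i j, d l) * Pa (i - 1)) * d j := by
      apply Finset.sum_congr rfl
      intro i hi
      have hij : i ≤ j := (Finset.mem_Icc.mp hi).2
      rw [Finset.prod_Ico_succ_top hij]; ring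
    rw [h2, ← Finset.sum_mul] at h1
    simp only [Finset.Ico_self, Finset.prod_empty, one_mul, Nat.add_sub_cancel] at h1
    rw [hchain' j hj]; rw [h1]; ring
  -- invariant
  have hinv : ∀ j, k ≤ j → D / (lam - 1) + 2 * L * |∏ l ∈ Finset.Ico k j, d l| ≤ |Dx j| := by
    intro j hj
    induction j, hj using Nat.le_induction with
    | base => simpa using hDxk
    | succ j hj ih =>
      have hdj := hexp j
      have habsP : |∏ l ∈ Finset.Ico k (j+1), d l| = |∏ l ∈ Finset.Ico k j, d l| * |d j| := by
        rw [Finset.prod_Ico_succ_top hj, abs_mul]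
      have hPnn : (0:ℝ) ≤ |∏ l ∈ Finset.Ico k j, d l| := abs_nonneg _
      have h1 : |d j| * |Dx j| - |Pa j| ≤ |Dx (j+1)| := by
        rw [hrec j hj, ← abs_mul]
        have h := abs_add_le (d j * Dx j + Pa j) (-(Pa j))
        simp only [add_neg_cancel_right, abs_neg] at h
        linarith
      have h2 : |d j| * (D / (lam - 1) + 2 * L * |∏ l ∈ Finset.Ico k j, d l|) ≤ |d j| * |Dx j| :=
        mul_le_mul_of_nonneg_left ih (by linarith)
      have h3 : D / (lam - 1) + D ≤ |d j| * (D / (lam - 1)) := by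
        have hq : D / (lam - 1) * (lam - 1) = D := div_mul_cancel₀ D (ne_of_gt hlam1)
        nlinarith [mul_le_mul_of_nonneg_right hdj hDdiv]
      have hPa' := hPa j
      have : 2 * L * (|∏ l ∈ Finset.Ico k j, d l| * |d j|) = |d j| * (2 * L * |∏ l ∈ Finset.Ico k j, d l|) := by ring
      rw [habsP, this]
      linarith
  intro j hj
  have hkj : k ≤ j := le_of_lt hj
  constructor
  · apply mul_le_mul_of_nonneg_left _ (by linarith : (0:ℝ) ≤ 2 * L)
    calc lam ^ (j - k) = ∏ l ∈ Finset.Ico k j, lam := by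
          rw [Finset.prod_const, Nat.card_Ico]
      _ ≤ ∏ l ∈ Finset.Ico k j, |d l| :=
          Finset.prod_le_prod (fun _ _ => le_of_lt hlam0) (fun l _ => hexp l)
      _ = |∏ l ∈ Finset.Ico k j, d l| := (Finset.abs_prod _ _).symm
  · have := hinv j hkj
    linarith
end

section
/- Let $(d_j)_{j\ge1}$ be a sequence of positive reals with $\limsup_{j\to\infty} d_j e^{j^\delta} < \infty$ for some $\delta>0$, and let $(\mathcal{P}_j)$ be partitions of $[0,\epsilon]$ into intervals on which maps $x_j$ are monotone with distortion bound $|\omega| \le C |x_j(\omega)|/\|x_j'|_\omega\|_\infty$ for each $\omega\in\mathcal{P}_j$. If for every $\delta_0>0$ there is $C_{\delta_0}$ with $\sum_{\omega\in\mathcal{P}_j} \|x_j'|_\omega\|_\infty^{-1} \le C_{\delta_0} e^{j^{\delta_0}}$ for all $j$, then there is a constant $C'$ such that for all $j \ge 1$, the total Lebesgue measure of the union of those $\omega \in \mathcal{P}_j$ with $|x_j(\omega)| \le d_j$ is at most $C' d_j^{1/2}$. -/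
open MeasureTheory Filter

/-- Control of the total size of partition elements with too small image (Lemma 4.1).
`P j` is the finite partition of `[0,ε]` into intervals of monotonicity of `x_j`,
`ximg j ω = |x_j(ω)|` the length of the image, `Dsup j ω = ‖x_j'|_ω‖_∞`. Under the
distortion bound `|ω| ≤ C |x_j(ω)| / ‖x_j'|_ω‖_∞`, condition (III), and stretched
exponential decay of `d j`, the union of those `ω ∈ P j` with `|x_j(ω)| ≤ d j` has
measure at most `C' d_j^{1/2}`. -/
theorem stmt_9 (ε C δ : ℝ) (hε : 0 < ε) (hC : 0 < C) (hδ : 0 < δ)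
    (d : ℕ → ℝ) (hd : ∀ j, 0 < d j)
    (hlim : ∃ K : ℝ, ∀ᶠ j : ℕ in atTop, d j * Real.exp ((j : ℝ) ^ δ) ≤ K)
    (P : ℕ → Finset (Set ℝ)) (ximg Dsup : ℕ → Set ℝ → ℝ)
    (hximg_nonneg : ∀ j, ∀ ω ∈ P j, 0 ≤ ximg j ω)
    (hDsup_pos : ∀ j, ∀ ω ∈ P j, 0 < Dsup j ω)
    (hpart : ∀ j, ∀ ω ∈ P j, ω ⊆ Set.Icc 0 ε ∧ MeasurableSet ω)
    (hdist : ∀ j, ∀ ω ∈ P j, (volume ω).toReal ≤ C * ximg j ω / Dsup j ω)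
    (hcond : ∀ δ0 : ℝ, 0 < δ0 → ∃ C0 : ℝ, ∀ j : ℕ, 1 ≤ j →
        ∑ ω ∈ P j, (Dsup j ω)⁻¹ ≤ C0 * Real.exp ((j : ℝ) ^ δ0)) :
    ∃ C' : ℝ, ∀ j : ℕ, 1 ≤ j →
      (volume (⋃₀ {ω : Set ℝ | ω ∈ P j ∧ ximg j ω ≤ d j})).toReal ≤
        C' * (d j) ^ ((1 : ℝ) / 2) := by
  obtain ⟨K, hK⟩ := hlim
  obtain ⟨N₀, hN₀⟩ := Filter.eventually_atTop.mp hK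
  obtain ⟨C0, hC0⟩ := hcond (δ / 2) (by positivity)
  have hC0nonneg : 0 ≤ C0 := by
    have h1 := hC0 1 le_rfl
    have hsum : 0 ≤ ∑ ω ∈ P 1, (Dsup 1 ω)⁻¹ :=
      Finset.sum_nonneg fun ω hω => inv_nonneg.2 (hDsup_pos 1 ω hω).le
    nlinarith [Real.exp_pos (((1 : ℕ) : ℝ) ^ (δ / 2))]
  set g : ℕ → ℝ := fun j => d j ^ ((1 : ℝ) / 2) * Real.exp ((j : ℝ) ^ (δ / 2)) with hg
  have hgnonneg : ∀ j, 0 ≤ g j := fun j => by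
    have := (hd j).le
    positivity
  set N₁ : ℕ := ⌈(2 : ℝ) ^ (2 / δ)⌉₊ with hN₁
  set N : ℕ := max N₀ N₁ with hN
  have hgb : ∀ j, N ≤ j → g j ≤ Real.sqrt K := by
    intro j hj
    have hj0 : N₀ ≤ j := le_trans (le_max_left _ _) hj
    have hj1 : ((2 : ℝ) ^ (2 / δ)) ≤ (j : ℝ) :=
      le_trans (Nat.le_ceil _) (by exact_mod_cast le_trans (le_max_right _ _) hj)
    have hjpos : (0 : ℝ) < (j : ℝ) := lt_of_lt_of_le (by positivity) hj1
    have h2 : (2 : ℝ) ≤ (j : ℝ) ^ (δ / 2) := by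
      have := Real.rpow_le_rpow (by positivity) hj1 (by positivity : (0:ℝ) ≤ δ / 2)
      calc (2 : ℝ) = ((2 : ℝ) ^ (2 / δ)) ^ (δ / 2) := by
            rw [← Real.rpow_mul (by norm_num : (0:ℝ) ≤ 2)]
            rw [show (2 / δ) * (δ / 2) = 1 by field_simp]
            exact (Real.rpow_one 2).symm
        _ ≤ (j : ℝ) ^ (δ / 2) := this
    set a : ℝ := (j : ℝ) ^ (δ / 2) with ha
    have haa : a * a = (j : ℝ) ^ δ := by
      rw [ha, ← Real.rpow_add hjpos]
      norm_num
    have h2a : a + a ≤ (j : ℝ) ^ δ := by nlinarith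
    have hdsq : d j ^ ((1 : ℝ) / 2) * d j ^ ((1 : ℝ) / 2) = d j := by
      rw [← Real.rpow_add (hd j)]; norm_num
    have hgsq : g j * g j ≤ K := by
      have : g j * g j = d j * Real.exp (a + a) := by
        rw [hg]; simp only
        rw [Real.exp_add]
        ring_nf
        rw [ha, mul_one_div]
        linear_combination (Real.exp ((j : ℝ) ^ (δ / 2))) ^ 2 * hdsq
      rw [this]
      calc d j * Real.exp (a + a) ≤ d j * Real.exp ((j : ℝ) ^ δ) := by
            exact mul_le_mul_of_nonneg_left (Real.exp_le_exp.2 h2a) (hd j).le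
        _ ≤ K := hN₀ j hj0
    exact Real.le_sqrt_of_sq_le (by nlinarith : g j ^ 2 ≤ K)
  set B : ℝ := max (Real.sqrt K) ((Finset.range (N + 1)).sup' (by simp) g) with hB
  have hBg : ∀ j, g j ≤ B := by
    intro j
    by_cases hj : j ≤ N
    · exact le_trans (Finset.le_sup' g (Finset.mem_range.2 (Nat.lt_succ_of_le hj)))
        (le_max_right _ _)
    · exact le_trans (hgb j (le_of_not_ge hj)) (le_max_left _ _)
  have hBnonneg : 0 ≤ B := le_trans (Real.sqrt_nonneg K) (le_max_left _ _)
  refine ⟨C * C0 * B, fun j hj => ?_⟩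
  set S := (P j).filter (fun ω => ximg j ω ≤ d j) with hS
  have hUeq : {ω : Set ℝ | ω ∈ P j ∧ ximg j ω ≤ d j} = (↑S : Set (Set ℝ)) := by
    ext ω; simp [hS, Finset.mem_filter]
  have hfin : ∀ ω ∈ S, volume ω ≠ ⊤ := by
    intro ω hω
    have hsub := (hpart j ω (Finset.mem_filter.mp hω).1).1
    have : volume ω ≤ volume (Set.Icc (0 : ℝ) ε) := measure_mono hsub
    exact ne_top_of_le_ne_top (by simp [Real.volume_Icc]) this
  have hUvol : volume (⋃₀ {ω : Set ℝ | ω ∈ P j ∧ ximg j ω ≤ d j}) ≤ ∑ ω ∈ S, volume ω := by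
    rw [hUeq, Set.sUnion_eq_biUnion]
    exact measure_biUnion_finset_le S id
  have hsumne : (∑ ω ∈ S, volume ω) ≠ ⊤ := by
    simp only [ne_eq, ENNReal.sum_eq_top, not_exists]
    exact fun ω h => hfin ω h.1 h.2
  have h1 : (volume (⋃₀ {ω : Set ℝ | ω ∈ P j ∧ ximg j ω ≤ d j})).toReal ≤
      ∑ ω ∈ S, (volume ω).toReal := by
    rw [← ENNReal.toReal_sum hfin]
    exact ENNReal.toReal_mono hsumne hUvol
  have h2 : ∑ ω ∈ S, (volume ω).toReal ≤ ∑ ω ∈ S, C * d j * (Dsup j ω)⁻¹ := by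
    refine Finset.sum_le_sum fun ω hω => ?_
    obtain ⟨hωP, hωd⟩ := Finset.mem_filter.mp hω
    have hD := hDsup_pos j ω hωP
    calc (volume ω).toReal ≤ C * ximg j ω / Dsup j ω := hdist j ω hωP
      _ ≤ C * d j / Dsup j ω := by gcongr
      _ = C * d j * (Dsup j ω)⁻¹ := by rw [div_eq_mul_inv]
  have h3 : ∑ ω ∈ S, C * d j * (Dsup j ω)⁻¹ ≤ ∑ ω ∈ P j, C * d j * (Dsup j ω)⁻¹ := by
    refine Finset.sum_le_sum_of_subset_of_nonneg (Finset.filter_subset _ _) fun ω hω _ => ?_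
    have := (hDsup_pos j ω hω).le
    have := (hd j).le
    positivity
  have h4 : ∑ ω ∈ P j, C * d j * (Dsup j ω)⁻¹ ≤ C * d j * (C0 * Real.exp ((j : ℝ) ^ (δ / 2))) := by
    rw [← Finset.mul_sum]
    exact mul_le_mul_of_nonneg_left (hC0 j hj) (mul_nonneg hC.le (hd j).le)
  have hdsq : d j ^ ((1 : ℝ) / 2) * d j ^ ((1 : ℝ) / 2) = d j := by
    rw [← Real.rpow_add (hd j)]; norm_num
  have h5 : C * d j * (C0 * Real.exp ((j : ℝ) ^ (δ / 2))) ≤ C * C0 * B * d j ^ ((1 : ℝ) / 2) := by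
    have hgj := hBg j
    have hd12 : (0 : ℝ) ≤ d j ^ ((1 : ℝ) / 2) := Real.rpow_nonneg (hd j).le _
    calc C * d j * (C0 * Real.exp ((j : ℝ) ^ (δ / 2)))
        = (C * C0 * d j ^ ((1 : ℝ) / 2)) * g j := by
          rw [hg]; simp only
          linear_combination (- C * C0 * Real.exp ((j : ℝ) ^ (δ / 2))) * hdsq
      _ ≤ (C * C0 * d j ^ ((1 : ℝ) / 2)) * B :=
          mul_le_mul_of_nonneg_left hgj (mul_nonneg (mul_nonneg hC.le hC0nonneg) hd12)
      _ = C * C0 * B * d j ^ ((1 : ℝ) / 2) := by ring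
  linarith
end
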